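/- If P1 and P2 are partitions with P1 ≤ P2 termwise, then there is a finite sequence of partitions P1 = Q^0 ≤ Q^1 ≤ ⋯ ≤ Q^m = P2, with m = |P2| − |P1|, such that each adjacent pair (Q^j, Q^{j+1}) is 1-linked. -/
import Mathlib


open scoped Classical

/-- A partition: weakly decreasing, eventually zero sequence of nonnegative integers. -/
def IsPartition (P : ℕ → ℕ) : Prop :=
  (∀ i, P (i + 1) ≤ P i) ∧ ∃ N, ∀ n ≥ N, P n = 0

/-- An arithmetic progression: a proper subset of ℤ whose set of differences is
closed under addition. -/
def IsAP (Λ : Set ℤ) : Prop :=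
  Λ ≠ Set.univ ∧
    ∀ a b c d : ℤ, a ∈ Λ → b ∈ Λ → c ∈ Λ → d ∈ Λ →
      ∃ x ∈ Λ, ∃ y ∈ Λ, x - y = (a - b) + (c - d)

/-- Upward displacement of a partition with respect to an arithmetic progression.
The convention `P_{-1} = ∞` is encoded by the disjunct `i = 0`. -/
noncomputable def upDisp (P : ℕ → ℕ) (Λ : Set ℤ) : ℕ → ℕ :=
  fun i => if ((P i : ℤ) - i) ∈ Λ ∧ (i = 0 ∨ P i < P (i - 1)) then P i + 1 else P i

/-- Downward displacement of a partition with respect to an arithmetic progression. -/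
noncomputable def downDisp (P : ℕ → ℕ) (Λ : Set ℤ) : ℕ → ℕ :=
  fun i => if ((P i : ℤ) - i - 1) ∈ Λ ∧ P (i + 1) < P i then P i - 1 else P i

/-- The sum `|P|` of the parts of a partition. -/
noncomputable def psum (P : ℕ → ℕ) : ℕ := ∑ᶠ i, P i

/-- Two partitions are linked if some arithmetic progression displaces one to the other. -/
def Linked (P Q : ℕ → ℕ) : Prop :=
  ∃ Λ : Set ℤ, IsAP Λ ∧ Q = upDisp P Λ ∧ P = downDisp Q Λ

/-- `k`-linked: linked with sums differing by `k`. -/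
def KLinked (k : ℕ) (P Q : ℕ → ℕ) : Prop :=
  Linked P Q ∧ psum Q = psum P + k

/-- A valid sequence of partitions: adjacent pairs are 1-linked or 2-linked. -/
def ValidSeq (n : ℕ) (s : ℕ → ℕ → ℕ) : Prop :=
  (∀ j ≤ n, IsPartition (s j)) ∧
    ∀ j < n, KLinked 1 (s j) (s (j + 1)) ∨ KLinked 2 (s j) (s (j + 1))

/-- The difficulty `δ(P)`: the least number of 1-linked adjacent pairs in a valid
sequence from the empty partition to `P`. -/
noncomputable def delta (P : ℕ → ℕ) : ℕ :=
  sInf { c | ∃ n s, ValidSeq n s ∧ s 0 = (fun _ => 0) ∧ s n = P ∧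
    c = ((Finset.range n).filter fun j => KLinked 1 (s j) (s (j + 1))).card }

/-- The conjugate (dual) partition: `P*_n = #{m : P_m > n}`. -/
noncomputable def conj (P : ℕ → ℕ) : ℕ → ℕ := fun n => Set.ncard { m | n < P m }
lemma psum_eq_sum {P : ℕ → ℕ} {N : ℕ} (h : ∀ n ≥ N, P n = 0) :
    psum P = ∑ i ∈ Finset.range N, P i := by
  apply finsum_eq_sum_of_support_subset
  intro x hx
  simp only [Finset.coe_range, Set.mem_Iio]
  by_contra hc
  exact hx (h x (le_of_not_gt hc))

lemma partition_antitone {P : ℕ → ℕ} (h : ∀ i, P (i + 1) ≤ P i) :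
    ∀ {j k : ℕ}, j ≤ k → P k ≤ P j := by
  intro j k hjk
  induction k with
  | zero => simp_all
  | succ n ih =>
    rcases Nat.lt_or_ge j (n+1) with hlt | hge
    · exact le_trans (h n) (ih (Nat.lt_succ_iff.mp hlt))
    · have : j = n + 1 := le_antisymm hjk hge
      simp [this]

lemma gap {P : ℕ → ℕ} (h : ∀ i, P (i + 1) ≤ P i) {j k : ℕ} (hjk : j ≤ k) :
    (P k : ℤ) - k + ((k : ℤ) - j) ≤ (P j : ℤ) - j := by
  have := partition_antitone h hjk
  have : (P k : ℤ) ≤ P j := by exact_mod_cast this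
  omega

lemma singleton_isAP (a : ℤ) : IsAP {a} := by
  constructor
  · intro h
    have : (a + 1) ∈ ({a} : Set ℤ) := h ▸ Set.mem_univ _
    simp at this
  · intro x y z w hx hy hz hw
    simp only [Set.mem_singleton_iff] at hx hy hz hw
    exact ⟨a, rfl, a, rfl, by rw [hx, hy, hz, hw]; ring⟩

lemma step (P P2 : ℕ → ℕ) (hP : IsPartition P) (h2 : IsPartition P2)
    (hle : ∀ i, P i ≤ P2 i) (hne : P ≠ P2) :
    ∃ Q, IsPartition Q ∧ (∀ i, P i ≤ Q i) ∧ (∀ i, Q i ≤ P2 i) ∧ KLinked 1 P Q := by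
  have hex : ∃ i, P i < P2 i := by
    by_contra hc
    push_neg at hc
    exact hne (funext fun i => le_antisymm (hle i) (hc i))
  set i := Nat.find hex with hi
  have hspec : P i < P2 i := Nat.find_spec hex
  have hmin : ∀ j < i, P j = P2 j := fun j hj =>
    le_antisymm (hle j) (le_of_not_gt (Nat.find_min hex hj))
  -- key: i = 0 or P i < P (i-1)
  have hlt : i = 0 ∨ P i < P (i - 1) := by
    rcases Nat.eq_zero_or_pos i with h0 | hpos
    · exact Or.inl h0
    · right
      have h1 : i - 1 < i := Nat.sub_lt hpos one_pos
      have := hmin (i - 1) h1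
      have h3 : P2 i ≤ P2 (i - 1) := by
        have : i - 1 + 1 = i := Nat.succ_pred_eq_of_pos hpos
        calc P2 i = P2 (i - 1 + 1) := by rw [this]
        _ ≤ P2 (i - 1) := h2.1 _
      omega
  set Q : ℕ → ℕ := Function.update P i (P i + 1) with hQ
  have hQi : Q i = P i + 1 := Function.update_self _ _ _
  have hQj : ∀ j ≠ i, Q j = P j := fun j hj => Function.update_of_ne hj _ _
  have hPQ : ∀ n, P n ≤ Q n := by
    intro n
    by_cases hn : n = i
    · subst hn; rw [hQi]; omega
    · rw [hQj n hn]
  have hQle : ∀ n, Q n ≤ P2 n := by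
    intro n
    by_cases hn : n = i
    · subst hn; rw [hQi]; omega
    · rw [hQj n hn]; exact hle n
  -- Q is a partition
  have hQpart : IsPartition Q := by
    constructor
    · intro k
      by_cases hk1 : k + 1 = i
      · have hki : k = i - 1 := by omega
        rw [hQj k (by omega), hk1, hQi, hki]
        rcases hlt with h0 | h0
        · omega
        · omega
      · by_cases hk : k = i
        · rw [hQj (k+1) hk1, hk, hQi]
          have := hP.1 k
          rw [hk] at this
          omega
        · rw [hQj (k+1) hk1, hQj k hk]; exact hP.1 k
    · obtain ⟨N2, hN2⟩ := h2.2
      exact ⟨N2, fun n hn => Nat.le_zero.mp (hN2 n hn ▸ hQle n)⟩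
  -- the singleton AP
  set Λ : Set ℤ := {(P i : ℤ) - i} with hΛ
  have hup : Q = upDisp P Λ := by
    funext j
    by_cases hj : j = i
    · subst hj
      rw [hQi]
      unfold upDisp
      rw [if_pos ⟨rfl, hlt⟩]
    · rw [hQj j hj]
      unfold upDisp
      rw [if_neg]
      rintro ⟨hmem, -⟩
      simp only [hΛ, Set.mem_singleton_iff] at hmem
      rcases Nat.lt_or_ge j i with h | h
      · have := gap hP.1 (le_of_lt h)
        omega
      · have := gap hP.1 (lt_of_le_of_ne h (Ne.symm hj)).le
        omega
  have hdown : P = downDisp Q Λ := by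
    funext j
    by_cases hj : j = i
    · subst hj
      unfold downDisp
      rw [if_pos]
      · rw [hQi]; omega
      constructor
      · rw [hQi]; simp only [hΛ, Set.mem_singleton_iff]; push_cast; ring
      · rw [hQj (i+1) (by omega), hQi]
        have := hP.1 i
        omega
    · rw [← hQj j hj]
      unfold downDisp
      rw [if_neg]
      rintro ⟨hmem, -⟩
      rw [hQj j hj] at hmem
      simp only [hΛ, Set.mem_singleton_iff] at hmem
      rcases Nat.lt_or_ge j i with h | h
      · -- j < i : P j - j ≥ P i - i + 2
        by_cases hj1 : j = i - 1
        · have hipos : 0 < i := by omega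
          rcases hlt with h0 | h0
          · omega
          · have : (P i : ℤ) < P (i - 1) := by exact_mod_cast h0
            rw [← hj1] at this
            omega
        · have := gap hP.1 (le_of_lt h)
          have h2j : (i : ℤ) - j ≥ 2 := by omega
          omega
      · have := gap hP.1 (lt_of_le_of_ne h (Ne.symm hj)).le
        omega
  -- psum
  have hpsum : psum Q = psum P + 1 := by
    obtain ⟨N, hN⟩ := hP.2
    set M := max N (i + 1) with hM
    have hPM : ∀ n ≥ M, P n = 0 := fun n hn => hN n (le_trans (le_max_left _ _) hn)
    have hQM : ∀ n ≥ M, Q n = 0 := by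
      intro n hn
      rw [hQj n (by omega)]
      exact hPM n hn
    rw [psum_eq_sum hQM, psum_eq_sum hPM]
    have hiM : i ∈ Finset.range M := Finset.mem_range.mpr (by omega)
    rw [hQ, Finset.sum_update_of_mem hiM, ← Finset.add_sum_erase _ P hiM, Finset.erase_eq]
    omega
  exact ⟨Q, hQpart, hPQ, hQle, ⟨Λ, singleton_isAP _, hup, hdown⟩, hpsum⟩

lemma psum_le {P Q : ℕ → ℕ} (hP : ∃ N, ∀ n ≥ N, P n = 0) (hQ : ∃ N, ∀ n ≥ N, Q n = 0)
    (hle : ∀ i, P i ≤ Q i) : psum P ≤ psum Q := by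
  obtain ⟨N1, h1⟩ := hP
  obtain ⟨N2, h2⟩ := hQ
  set M := max N1 N2
  rw [psum_eq_sum (fun n hn => h1 n (le_trans (le_max_left _ _) hn)),
    psum_eq_sum (fun n hn => h2 n (le_trans (le_max_right _ _) hn))]
  exact Finset.sum_le_sum fun i _ => hle i

lemma psum_eq_imp {P Q : ℕ → ℕ} (hP : ∃ N, ∀ n ≥ N, P n = 0) (hQ : ∃ N, ∀ n ≥ N, Q n = 0)
    (hle : ∀ i, P i ≤ Q i) (heq : psum P = psum Q) : P = Q := by
  obtain ⟨N1, h1⟩ := hP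
  obtain ⟨N2, h2⟩ := hQ
  set M := max N1 N2 with hM
  have hPM : ∀ n ≥ M, P n = 0 := fun n hn => h1 n (le_trans (le_max_left _ _) hn)
  have hQM : ∀ n ≥ M, Q n = 0 := fun n hn => h2 n (le_trans (le_max_right _ _) hn)
  rw [psum_eq_sum hPM, psum_eq_sum hQM] at heq
  funext i
  rcases Nat.lt_or_ge i M with hi | hi
  · by_contra hc
    have hstrict : P i < Q i := lt_of_le_of_ne (hle i) hc
    have : ∑ j ∈ Finset.range M, P j < ∑ j ∈ Finset.range M, Q j :=
      Finset.sum_lt_sum (fun j _ => hle j) ⟨i, Finset.mem_range.mpr hi, hstrict⟩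
    omega
  · rw [hPM i hi, hQM i hi]

lemma chain (d : ℕ) : ∀ P1 P2 : ℕ → ℕ, IsPartition P1 → IsPartition P2 →
    (∀ i, P1 i ≤ P2 i) → psum P2 = psum P1 + d →
    ∃ s : ℕ → ℕ → ℕ, s 0 = P1 ∧ s d = P2 ∧
      (∀ j ≤ d, IsPartition (s j)) ∧
      (∀ j < d, ∀ i, s j i ≤ s (j + 1) i) ∧
      (∀ j < d, KLinked 1 (s j) (s (j + 1))) := by
  induction d with
  | zero =>
    intro P1 P2 h1 h2 hle hsum
    have : P1 = P2 := psum_eq_imp h1.2 h2.2 hle (by omega)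
    subst this
    exact ⟨fun _ => P1, rfl, rfl, fun j _ => h1, fun j hj => by omega, fun j hj => by omega⟩
  | succ d ih =>
    intro P1 P2 h1 h2 hle hsum
    have hne : P1 ≠ P2 := by
      intro h; rw [h] at hsum; omega
    obtain ⟨Q, hQpart, hPQ, hQle, hK⟩ := step P1 P2 h1 h2 hle hne
    have hQsum : psum Q = psum P1 + 1 := hK.2
    obtain ⟨s', hs0, hsd, hspart, hsmono, hsK⟩ := ih Q P2 hQpart h2 hQle (by omega)
    refine ⟨fun j => if j = 0 then P1 else s' (j - 1), by simp, ?_, ?_, ?_, ?_⟩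
    · simp only [Nat.succ_ne_zero, if_neg, Nat.add_sub_cancel]
      exact hsd
    · intro j hj
      by_cases hj0 : j = 0
      · simp [hj0, h1]
      · simp only [if_neg hj0]
        exact hspart _ (by omega)
    · intro j hj i
      by_cases hj0 : j = 0
      · simp only [hj0, if_pos rfl, if_neg (by omega : (0:ℕ) + 1 ≠ 0)]
        simpa [hs0] using hPQ i
      · simp only [if_neg hj0, if_neg (by omega : j + 1 ≠ 0)]
        have : j - 1 + 1 = j + 1 - 1 := by omega
        rw [← this]
        exact hsmono (j - 1) (by omega) i
    · intro j hj
      by_cases hj0 : j = 0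
      · simp only [hj0, if_pos rfl, if_neg (by omega : (0:ℕ) + 1 ≠ 0)]
        simpa [hs0] using hK
      · simp only [if_neg hj0, if_neg (by omega : j + 1 ≠ 0)]
        have heq : j + 1 - 1 = j - 1 + 1 := by omega
        rw [heq]
        exact hsK (j - 1) (by omega)


/-- Any two comparable partitions are connected by a chain of 1-linked pairs of
length `|P2| - |P1|`. -/
theorem stmt3 (P1 P2 : ℕ → ℕ) (h1 : IsPartition P1) (h2 : IsPartition P2)
    (hle : ∀ i, P1 i ≤ P2 i) :
    ∃ s : ℕ → ℕ → ℕ, s 0 = P1 ∧ s (psum P2 - psum P1) = P2 ∧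
      (∀ j ≤ psum P2 - psum P1, IsPartition (s j)) ∧
      (∀ j < psum P2 - psum P1, ∀ i, s j i ≤ s (j + 1) i) ∧
      (∀ j < psum P2 - psum P1, KLinked 1 (s j) (s (j + 1))) := by
  have hps : psum P1 ≤ psum P2 := psum_le h1.2 h2.2 hle
  exact chain (psum P2 - psum P1) P1 P2 h1 h2 hle (by omega)
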